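/- Let P ∈ ℝ^{n×n} be symmetric positive definite, λ ∈ [0, 1), W symmetric positive definite, and let (e_k)_{k≥0} be a sequence of square-integrable random vectors in ℝ^n (with arbitrary square-integrable initial condition e_0) satisfying the moment recursion E[e_{k+1}^⊤ P e_{k+1}] ≤ λ · E[e_k^⊤ P e_k] + Tr(PW) for all k. Then for every ε ∈ (0, 1) and every ζ > 0, there exists a finite time t (depending on e_0) such that for all k ≥ t: Pr{ e_k^⊤ P e_k ≤ (1/(ε(1 − λ))) · Tr(PW) + ζ } ≥ 1 − ε. That is, the set ℛ^ε(λ) = { e ∈ ℝ^n : e^⊤ P e ≤ Tr(PW)/(ε(1 − λ)) + ζ } is a probabilistic ultimate bound with violation probability ε. -/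

import Mathlib

open Matrix MeasureTheory

lemma quad_meas {n : ℕ} {Ω : Type*} [MeasurableSpace Ω]
    (P : Matrix (Fin n) (Fin n) ℝ) {f : Ω → Fin n → ℝ} (hf : Measurable f) :
    Measurable (fun ω => f ω ⬝ᵥ P.mulVec (f ω)) := by
  simp only [dotProduct, mulVec]
  exact Finset.measurable_sum _ fun i _ =>
    ((measurable_pi_apply i).comp hf).mul
      (Finset.measurable_sum _ fun j _ => measurable_const.mul ((measurable_pi_apply j).comp hf))

lemma quad_integrable {n : ℕ} {Ω : Type*} [MeasurableSpace Ω] {μ : Measure Ω}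
    (P : Matrix (Fin n) (Fin n) ℝ) {f : Ω → Fin n → ℝ} (hf : Measurable f)
    (hf2 : MemLp f 2 μ) :
    Integrable (fun ω => f ω ⬝ᵥ P.mulVec (f ω)) μ := by
  have hcomp : ∀ i : Fin n, MemLp (fun ω => f ω i) 2 μ := fun i =>
    (ContinuousLinearMap.proj (R := ℝ) (φ := fun _ : Fin n => ℝ) i).comp_memLp' hf2
  have hij : ∀ i j : Fin n, Integrable (fun ω => f ω i * f ω j) μ := by
    intro i j
    have h1 := (hcomp i).integrable_sq
    have h2 := (hcomp j).integrable_sq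
    refine Integrable.mono' (((h1.add h2).const_mul (1/2 : ℝ)))
      (((measurable_pi_apply i).comp hf).mul ((measurable_pi_apply j).comp hf)).aestronglyMeasurable ?_
    filter_upwards with ω
    simp only [Pi.add_apply]
    rw [Real.norm_eq_abs, abs_mul]
    nlinarith [sq_nonneg (|f ω i| - |f ω j|), sq_abs (f ω i), sq_abs (f ω j),
      abs_nonneg (f ω i), abs_nonneg (f ω j)]
  have heq : (fun ω => f ω ⬝ᵥ P.mulVec (f ω))
      = fun ω => ∑ i, ∑ j, P i j * (f ω i * f ω j) := by
    funext ω
    simp only [dotProduct, mulVec, Finset.mul_sum]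
    exact Finset.sum_congr rfl fun i _ => Finset.sum_congr rfl fun j _ => by ring
  rw [heq]
  exact integrable_finset_sum _ fun i _ =>
    integrable_finset_sum _ fun j _ => (hij i j).const_mul _

lemma trace_PW_nonneg {n : ℕ} {P W : Matrix (Fin n) (Fin n) ℝ}
    (hP : P.PosDef) (hW : W.PosDef) : 0 ≤ (P * W).trace := by
  obtain ⟨B, hB⟩ : ∃ B : Matrix (Fin n) (Fin n) ℝ, W = Bᵀ * B := by
    open scoped MatrixOrder in
    have h0 : (0 : Matrix (Fin n) (Fin n) ℝ) ≤ W := Matrix.nonneg_iff_posSemidef.mpr hW.posSemidef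
    obtain ⟨X, hX, -, hXW⟩ :=
      CFC.exists_sqrt_of_isSelfAdjoint_of_quasispectrumRestricts hW.posSemidef.isHermitian
        (QuasispectrumRestricts.nnreal_of_nonneg h0)
    refine ⟨X, ?_⟩
    rw [← hXW]
    congr 1
    exact (hX.star_eq.symm.trans (Matrix.star_eq_conjTranspose X)).trans
      (Matrix.conjTranspose_eq_transpose_of_trivial X)
  rw [hB, ← Matrix.mul_assoc, Matrix.trace_mul_cycle]
  have hpos := hP.posSemidef.mul_mul_conjTranspose_same B
  rw [Matrix.trace]
  refine Finset.sum_nonneg fun i _ => ?_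
  have h := hpos.dotProduct_mulVec_nonneg (Pi.single i 1)
  simpa [Matrix.mulVec_single, dotProduct_single, Pi.single_apply] using h

/-- If `(e_k)` are square-integrable random vectors (arbitrary square-integrable
initial condition) whose second moments satisfy the recursion
`E[e_{k+1}ᵀ P e_{k+1}] ≤ λ E[e_kᵀ P e_k] + Tr(PW)`, then for every `ε ∈ (0,1)`
and every `ζ > 0` there is a finite time `t` such that for all `k ≥ t`,
`Pr{ e_kᵀ P e_k ≤ Tr(PW)/(ε(1 − λ)) + ζ } ≥ 1 − ε`; i.e. the set `ℛ^ε(λ)` is a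
probabilistic ultimate bound with violation probability `ε`. -/
theorem stmt6 {n : ℕ} {Ω : Type*} [MeasurableSpace Ω] (μ : Measure Ω)
    [IsProbabilityMeasure μ]
    (P W : Matrix (Fin n) (Fin n) ℝ) (hP : P.PosDef) (hW : W.PosDef)
    (lam : ℝ) (hlam : lam ∈ Set.Ico (0 : ℝ) 1)
    (e : ℕ → Ω → Fin n → ℝ)
    (heMeas : ∀ k, Measurable (e k)) (heL2 : ∀ k, MemLp (e k) 2 μ)
    (hrec : ∀ k, ∫ ω, e (k + 1) ω ⬝ᵥ P.mulVec (e (k + 1) ω) ∂μ ≤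
      lam * ∫ ω, e k ω ⬝ᵥ P.mulVec (e k ω) ∂μ + (P * W).trace)
    (ε : ℝ) (hε : ε ∈ Set.Ioo (0 : ℝ) 1) (ζ : ℝ) (hζ : 0 < ζ) :
    ∃ t : ℕ, ∀ k, t ≤ k →
      1 - ε ≤ (μ {ω | e k ω ⬝ᵥ P.mulVec (e k ω) ≤
        1 / (ε * (1 - lam)) * (P * W).trace + ζ}).toReal := by
  obtain ⟨hl0, hl1⟩ := hlam
  obtain ⟨hε0, hε1⟩ := hε
  set T : ℝ := (P * W).trace with hTdef
  have hT : 0 ≤ T := trace_PW_nonneg hP hW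
  have h1l : (0:ℝ) < 1 - lam := by linarith
  set X : ℕ → Ω → ℝ := fun k ω => e k ω ⬝ᵥ P.mulVec (e k ω) with hXdef
  have hXnn : ∀ k ω, 0 ≤ X k ω := by
    intro k ω
    simpa using hP.posSemidef.dotProduct_mulVec_nonneg (e k ω)
  have hXint : ∀ k, Integrable (X k) μ := fun k => quad_integrable P (heMeas k) (heL2 k)
  set V : ℕ → ℝ := fun k => ∫ ω, X k ω ∂μ with hVdef
  have hV0 : 0 ≤ V 0 := integral_nonneg (hXnn 0)
  have hVb : ∀ k, V k ≤ lam ^ k * V 0 + T / (1 - lam) := by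
    intro k
    induction k with
    | zero => simp; positivity
    | succ k ih =>
      have h := hrec k
      have : V (k+1) ≤ lam * V k + T := h
      have h2 : lam * V k ≤ lam * (lam ^ k * V 0 + T / (1 - lam)) :=
        mul_le_mul_of_nonneg_left ih hl0
      have h3 : lam * (lam ^ k * V 0 + T / (1 - lam)) + T
          ≤ lam ^ (k+1) * V 0 + T / (1 - lam) := by
        rw [pow_succ]
        have heq : lam * (T / (1 - lam)) + T = T / (1 - lam) := by
          field_simp
          ring
        nlinarith [heq]
      linarith
  -- choose t
  set δ : ℝ := ε * ζ / (V 0 + 1) with hδdef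
  have hδ : 0 < δ := by positivity
  obtain ⟨t, ht⟩ := exists_pow_lt_of_lt_one hδ hl1
  refine ⟨t, fun k hk => ?_⟩
  have hpow : lam ^ k ≤ lam ^ t := pow_le_pow_of_le_one hl0 hl1.le hk
  have hkV : lam ^ k * V 0 < ε * ζ := by
    have h1 : lam ^ k * V 0 ≤ δ * V 0 :=
      mul_le_mul_of_nonneg_right (le_of_lt (lt_of_le_of_lt hpow ht)) hV0
    have h2 : δ * V 0 < δ * (V 0 + 1) := by nlinarith
    have h3 : δ * (V 0 + 1) = ε * ζ := by
      have h0 : V 0 + 1 ≠ 0 := by positivity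
      rw [hδdef]
      field_simp
    linarith
  set B : ℝ := 1 / (ε * (1 - lam)) * T + ζ with hBdef
  have hB : 0 < B := by
    have h : 0 ≤ 1 / (ε * (1 - lam)) * T := by positivity
    rw [hBdef]
    linarith
  have hεB : ε * B = T / (1 - lam) + ε * ζ := by
    rw [hBdef]
    field_simp
  have hVlt : V k < ε * B := by
    have := hVb k
    rw [hεB]
    linarith
  -- Markov
  have hmar := mul_meas_ge_le_integral_of_nonneg
    (Filter.Eventually.of_forall (hXnn k)) (hXint k) B
  have hm2 : (μ {ω | B ≤ X k ω}).toReal < ε := by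
    have : B * (μ {ω | B ≤ X k ω}).toReal < B * ε := by
      rw [mul_comm ε B] at hVlt
      exact lt_of_le_of_lt hmar hVlt
    exact lt_of_mul_lt_mul_left this hB.le
  set S : Set Ω := {ω | X k ω ≤ B} with hSdef
  have hSmeas : MeasurableSet S := measurableSet_le (quad_meas P (heMeas k)) measurable_const
  have hsub : Sᶜ ⊆ {ω | B ≤ X k ω} := by
    intro ω hω
    have hω' : ¬ X k ω ≤ B := hω
    exact le_of_lt (lt_of_not_ge hω')
  have hcompl : (μ Sᶜ).toReal ≤ ε :=
    le_of_lt (lt_of_le_of_lt (ENNReal.toReal_mono (measure_ne_top _ _) (measure_mono hsub)) hm2)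
  have hsum : (μ S).toReal + (μ Sᶜ).toReal = 1 := by
    rw [← ENNReal.toReal_add (measure_ne_top _ _) (measure_ne_top _ _),
      measure_add_measure_compl hSmeas, measure_univ, ENNReal.toReal_one]
  linarith
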